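/- arXiv:1508.06763 — 5 statements merged into one kernel-verified Lean document; each statement's English description precedes it below -/
import Mathlib

section
/- The function g : ℝ → ℝ defined by g(t) = log(sinh t / t) for t ≠ 0 and g(0) = 0 is convex on all of ℝ. -/
open Real Set Filter Topology

private lemma g_contOn : ContinuousOn (fun t : ℝ => Real.log (Real.sinh t / t)) (Ici 0) := by
  intro x hx
  rcases eq_or_lt_of_le (mem_Ici.mp hx : (0:ℝ) ≤ x) with rfl | hx'
  · have hslope : Tendsto (fun t : ℝ => Real.sinh t / t) (𝓝[≠] (0:ℝ)) (𝓝 1) := by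
      have h := Real.hasDerivAt_sinh 0
      rw [hasDerivAt_iff_tendsto_slope, Real.cosh_zero] at h
      refine h.congr fun t => ?_
      simp [slope_def_field]
    have hlog : Tendsto (fun t : ℝ => Real.log (Real.sinh t / t)) (𝓝[≠] (0:ℝ)) (𝓝 0) := by
      have h := (Real.continuousAt_log (by norm_num : (1:ℝ) ≠ 0)).tendsto
      rw [Real.log_one] at h
      exact h.comp hslope
    rw [show Ici (0:ℝ) = insert 0 (Ioi 0) from (Set.Ioi_insert).symm,
      continuousWithinAt_insert_self]
    unfold ContinuousWithinAt
    simp only [Real.sinh_zero, zero_div, Real.log_zero]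
    exact hlog.mono_left (nhdsWithin_mono _ fun y hy => ne_of_gt hy)
  · have hx0 : x ≠ 0 := hx'.ne'
    have hsinh : 0 < Real.sinh x := Real.sinh_pos_iff.mpr hx'
    have hcont : ContinuousAt (fun t : ℝ => Real.sinh t / t) x :=
      (Real.continuous_sinh.continuousAt).div continuousAt_id hx0
    exact (hcont.log (ne_of_gt (div_pos hsinh hx'))).continuousWithinAt

private lemma g_hasDerivAt {x : ℝ} (hx : 0 < x) :
    HasDerivAt (fun t : ℝ => Real.log (Real.sinh t / t))
      (Real.cosh x / Real.sinh x - x⁻¹) x := by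
  have hsinh : 0 < Real.sinh x := Real.sinh_pos_iff.mpr hx
  have h1 : HasDerivAt (fun t : ℝ => Real.log (Real.sinh t) - Real.log t)
      (Real.cosh x / Real.sinh x - x⁻¹) x := by
    have hs : HasDerivAt (fun t : ℝ => Real.log (Real.sinh t))
        (Real.cosh x / Real.sinh x) x :=
      (Real.hasDerivAt_sinh x).log hsinh.ne'
    have hl : HasDerivAt Real.log x⁻¹ x := Real.hasDerivAt_log hx.ne'
    exact hs.sub hl
  refine h1.congr_of_eventuallyEq ?_
  filter_upwards [eventually_gt_nhds hx] with t ht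
  rw [Real.log_div (Real.sinh_pos_iff.mpr ht).ne' ht.ne']

private lemma deriv_nonneg_aux {x : ℝ} (hx : 0 < x) :
    0 ≤ Real.cosh x / Real.sinh x - x⁻¹ := by
  have hsinh : 0 < Real.sinh x := Real.sinh_pos_iff.mpr hx
  -- sinh x ≤ x * cosh x
  have key : Real.sinh x ≤ x * Real.cosh x := by
    have hmono : MonotoneOn (fun t : ℝ => t * Real.cosh t - Real.sinh t) (Ici 0) := by
      apply monotoneOn_of_deriv_nonneg (convex_Ici 0)
      · fun_prop
      · intro t _
        exact (((hasDerivAt_id t).mul (Real.hasDerivAt_cosh t)).sub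
          (Real.hasDerivAt_sinh t)).differentiableAt.differentiableWithinAt
      · intro t ht
        rw [interior_Ici] at ht
        have hd : deriv (fun t : ℝ => t * Real.cosh t - Real.sinh t) t
            = t * Real.sinh t := by
          have := (((hasDerivAt_id t).mul (Real.hasDerivAt_cosh t)).sub
            (Real.hasDerivAt_sinh t)).deriv
          simpa [mul_comm] using this
        rw [hd]
        have hst := Real.sinh_pos_iff.mpr (ht : 0 < t)
        exact mul_nonneg (le_of_lt ht) hst.le
    have := hmono (self_mem_Ici) (le_of_lt hx : (0:ℝ) ≤ x) hx.le
    simpa using this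
  rw [sub_nonneg, inv_eq_one_div, div_le_div_iff₀ hx hsinh]
  nlinarith [Real.cosh_pos (x := x)]

private lemma g_hasDerivAt2 {x : ℝ} (hx : 0 < x) :
    HasDerivAt (fun t : ℝ => Real.cosh t / Real.sinh t - t⁻¹)
      ((Real.sinh x * Real.sinh x - Real.cosh x * Real.cosh x) / Real.sinh x ^ 2 + (x ^ 2)⁻¹) x := by
  have hsinh : 0 < Real.sinh x := Real.sinh_pos_iff.mpr hx
  have h1 : HasDerivAt (fun t : ℝ => Real.cosh t / Real.sinh t)
      ((Real.sinh x * Real.sinh x - Real.cosh x * Real.cosh x) / Real.sinh x ^ 2) x :=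
    (Real.hasDerivAt_cosh x).div (Real.hasDerivAt_sinh x) hsinh.ne'
  have h2 : HasDerivAt (fun t : ℝ => t⁻¹) (-(x ^ 2)⁻¹) x := hasDerivAt_inv hx.ne'
  rw [← sub_neg_eq_add]
  exact h1.sub h2

private lemma deriv2_nonneg_aux {x : ℝ} (hx : 0 < x) :
    0 ≤ (Real.sinh x * Real.sinh x - Real.cosh x * Real.cosh x) / Real.sinh x ^ 2 + (x ^ 2)⁻¹ := by
  have hsinh : 0 < Real.sinh x := Real.sinh_pos_iff.mpr hx
  have hc : Real.cosh x * Real.cosh x - Real.sinh x * Real.sinh x = 1 := by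
    have := Real.cosh_sq_sub_sinh_sq x
    nlinarith [this]
  have h1 : (Real.sinh x * Real.sinh x - Real.cosh x * Real.cosh x) / Real.sinh x ^ 2
      = -(Real.sinh x ^ 2)⁻¹ := by
    rw [show Real.sinh x * Real.sinh x - Real.cosh x * Real.cosh x = -1 by nlinarith]
    field_simp
  rw [h1]
  have hxs : x ≤ Real.sinh x := (Real.self_lt_sinh_iff.mpr hx).le
  have : (Real.sinh x ^ 2)⁻¹ ≤ (x ^ 2)⁻¹ := by
    apply inv_anti₀ (by positivity)
    nlinarith
  linarith

private lemma g_convexOn_Ici :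
    ConvexOn ℝ (Ici 0) (fun t : ℝ => Real.log (Real.sinh t / t)) := by
  apply convexOn_of_hasDerivWithinAt2_nonneg (convex_Ici 0) g_contOn
    (f' := fun t => Real.cosh t / Real.sinh t - t⁻¹)
    (f'' := fun t => (Real.sinh t * Real.sinh t - Real.cosh t * Real.cosh t) / Real.sinh t ^ 2
      + (t ^ 2)⁻¹)
  · intro t ht
    rw [interior_Ici] at ht
    exact (g_hasDerivAt ht).hasDerivWithinAt
  · intro t ht
    rw [interior_Ici] at ht
    exact (g_hasDerivAt2 ht).hasDerivWithinAt
  · intro t ht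
    rw [interior_Ici] at ht
    exact deriv2_nonneg_aux ht

private lemma g_monotoneOn_Ici :
    MonotoneOn (fun t : ℝ => Real.log (Real.sinh t / t)) (Ici 0) := by
  apply monotoneOn_of_deriv_nonneg (convex_Ici 0) g_contOn
  · intro t ht
    rw [interior_Ici] at ht
    exact (g_hasDerivAt ht).differentiableAt.differentiableWithinAt
  · intro t ht
    rw [interior_Ici] at ht
    rw [(g_hasDerivAt ht).deriv]
    exact deriv_nonneg_aux ht

/-- The function `t ↦ log (sinh t / t)` (with value `0` at `t = 0` by Lean's conventions
`0/0 = 0` and `log 0 = 0`) is convex on all of `ℝ`. -/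
theorem log_sinh_div_self_convexOn :
    ConvexOn ℝ Set.univ (fun t : ℝ => Real.log (Real.sinh t / t)) := by
  have habs : ConvexOn ℝ (univ : Set ℝ) (fun t : ℝ => |t|) := by
    refine ⟨convex_univ, fun x _ y _ a b ha hb hab => ?_⟩
    simp only [smul_eq_mul]
    calc |a * x + b * y| ≤ |a * x| + |b * y| := abs_add_le _ _
      _ = a * |x| + b * |y| := by rw [abs_mul, abs_mul, abs_of_nonneg ha, abs_of_nonneg hb]
  have himg : (fun t : ℝ => |t|) '' univ = Ici 0 := by
    ext x
    simp only [image_univ, mem_range, mem_Ici]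
    constructor
    · rintro ⟨y, rfl⟩; exact abs_nonneg y
    · intro hx; exact ⟨x, abs_of_nonneg hx⟩
  have hcomp : ConvexOn ℝ (univ : Set ℝ)
      ((fun t : ℝ => Real.log (Real.sinh t / t)) ∘ fun t : ℝ => |t|) := by
    apply ConvexOn.comp _ habs
    · rw [himg]; exact g_monotoneOn_Ici
    · rw [himg]; exact g_convexOn_Ici
  have heq : ∀ t : ℝ, Real.log (Real.sinh |t| / |t|) = Real.log (Real.sinh t / t) := by
    intro t
    rcases le_or_gt 0 t with h | h
    · rw [abs_of_nonneg h]
    · rw [abs_of_neg h, Real.sinh_neg, neg_div_neg_eq]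
  exact hcomp.congr fun t _ => (heq t)
end

section
/- Let η̃ : ℝ → ℝ be defined by η̃(t) = sinh t / t. Then for every t ≠ 0 one has sinh(t)² > t², and the log-convexity discriminant satisfies η̃(t) · η̃''(t) − (η̃'(t))² = (sinh(t)² − t²)/t⁴ > 0, where η̃' = deriv η̃ and η̃'' is the second derivative of η̃. -/
open Real

lemma sinh_div_hasDerivAt {s : ℝ} (hs : s ≠ 0) :
    HasDerivAt (fun s : ℝ => Real.sinh s / s)
      ((Real.cosh s * s - Real.sinh s) / s ^ 2) s := by
  have := (Real.hasDerivAt_sinh s).div (hasDerivAt_id s) hs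
  exact this.congr_deriv (by simp)

lemma deriv_sinh_div {s : ℝ} (hs : s ≠ 0) :
    deriv (fun s : ℝ => Real.sinh s / s) s
      = (Real.cosh s * s - Real.sinh s) / s ^ 2 :=
  (sinh_div_hasDerivAt hs).deriv

lemma deriv2_sinh_div {t : ℝ} (ht : t ≠ 0) :
    deriv (deriv (fun s : ℝ => Real.sinh s / s)) t
      = (Real.sinh t * t * t ^ 2
          - (Real.cosh t * t - Real.sinh t) * (2 * t)) / (t ^ 2) ^ 2 := by
  have hev : deriv (fun s : ℝ => Real.sinh s / s)
      =ᶠ[nhds t] fun s => (Real.cosh s * s - Real.sinh s) / s ^ 2 := by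
    filter_upwards [isOpen_ne.mem_nhds ht] with s hs
    exact deriv_sinh_div hs
  rw [hev.deriv_eq]
  have h : HasDerivAt (fun s : ℝ => (Real.cosh s * s - Real.sinh s) / s ^ 2)
      (((Real.sinh t * t + Real.cosh t * 1 - Real.cosh t) * t ^ 2
        - (Real.cosh t * t - Real.sinh t) * (2 * t)) / (t ^ 2) ^ 2) t := by
    exact (((Real.hasDerivAt_cosh t).mul (hasDerivAt_id t)).sub
      (Real.hasDerivAt_sinh t)).div (hasDerivAt_pow 2 t |>.congr_deriv (by ring))
      (pow_ne_zero 2 ht)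
  rw [h.deriv]; ring

/-- For `η̃ t = sinh t / t` and every `t ≠ 0`, one has `sinh t ^ 2 > t ^ 2`, and the
log-convexity discriminant satisfies
`η̃ t * η̃'' t - (η̃' t) ^ 2 = (sinh t ^ 2 - t ^ 2) / t ^ 4 > 0`. -/
theorem sinh_div_self_log_convexity_discriminant (t : ℝ) (ht : t ≠ 0) :
    Real.sinh t ^ 2 > t ^ 2 ∧
    (fun s : ℝ => Real.sinh s / s) t *
        deriv (deriv (fun s : ℝ => Real.sinh s / s)) t -
      (deriv (fun s : ℝ => Real.sinh s / s) t) ^ 2 =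
        (Real.sinh t ^ 2 - t ^ 2) / t ^ 4 ∧
    0 < (Real.sinh t ^ 2 - t ^ 2) / t ^ 4 := by
  have hlt : t ^ 2 < Real.sinh t ^ 2 := by
    have habs : |t| < |Real.sinh t| := by
      rw [Real.abs_sinh]
      exact Real.self_lt_sinh_iff.mpr (abs_pos.mpr ht)
    calc t ^ 2 = |t| ^ 2 := (sq_abs t).symm
      _ < |Real.sinh t| ^ 2 := by
          exact pow_lt_pow_left₀ habs (abs_nonneg t) two_ne_zero
      _ = Real.sinh t ^ 2 := sq_abs _
  refine ⟨hlt, ?_, ?_⟩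
  · rw [deriv_sinh_div ht, deriv2_sinh_div ht]
    have h := Real.cosh_sq t
    field_simp
    linear_combination (-t^2) * h
  · exact div_pos (sub_pos.mpr hlt) (by positivity)
end

section
/- Let E be a real vector space, ι a finite index set, and α : ι → (E →ₗ[ℝ] ℝ) a family of linear functionals on E. Then the function Y ↦ ∑_{i ∈ ι} log( sinh(αᵢ(Y)) / αᵢ(Y) ) is convex on all of E (with the summand understood as 0 whenever αᵢ(Y) = 0, which is the continuous extension value). -/
open Real Set

noncomputable def lsd : ℝ → ℝ := fun t => Real.log (Real.sinh t / t)

lemma lsd_even (t : ℝ) : lsd (-t) = lsd t := by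
  simp [lsd, Real.sinh_neg, neg_div_neg_eq]

lemma sinh_div_pos {x : ℝ} (hx : 0 < x) : 0 < Real.sinh x / x :=
  div_pos (by simpa using Real.sinh_pos_iff.2 hx) hx

lemma lsd_hasDerivAt {x : ℝ} (hx : 0 < x) :
    HasDerivAt lsd (Real.cosh x / Real.sinh x - 1 / x) x := by
  have hx0 : x ≠ 0 := ne_of_gt hx
  have hs : Real.sinh x ≠ 0 := ne_of_gt (Real.sinh_pos_iff.2 hx)
  have h1 : HasDerivAt (fun t : ℝ => Real.sinh t / t)
      ((Real.cosh x * x - Real.sinh x * 1) / x ^ 2) x :=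
    (Real.hasDerivAt_sinh x).div (hasDerivAt_id x) hx0
  have h2 := h1.log (ne_of_gt (sinh_div_pos hx))
  convert h2 using 1
  · rfl
  field_simp

lemma lsd_deriv2 {x : ℝ} (hx : 0 < x) :
    HasDerivAt (fun t : ℝ => Real.cosh t / Real.sinh t - 1 / t)
      (1 / x ^ 2 - 1 / Real.sinh x ^ 2) x := by
  have hx0 : x ≠ 0 := ne_of_gt hx
  have hs : Real.sinh x ≠ 0 := ne_of_gt (Real.sinh_pos_iff.2 hx)
  have h1 : HasDerivAt (fun t : ℝ => Real.cosh t / Real.sinh t)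
      ((Real.sinh x * Real.sinh x - Real.cosh x * Real.cosh x) / Real.sinh x ^ 2) x :=
    (Real.hasDerivAt_cosh x).div (Real.hasDerivAt_sinh x) hs
  have h2 : HasDerivAt (fun t : ℝ => 1 / t) (-(1 / x ^ 2)) x := by
    simpa [one_div] using hasDerivAt_inv hx0
  refine (h1.sub h2).congr_deriv ?_
  have hcs : Real.cosh x ^ 2 - Real.sinh x ^ 2 = 1 := Real.cosh_sq_sub_sinh_sq x
  have : Real.sinh x * Real.sinh x - Real.cosh x * Real.cosh x = -1 := by nlinarith
  rw [this]
  field_simp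
  ring

lemma lsd_continuousOn : ContinuousOn lsd (Set.Ici 0) := by
  intro x hx
  rcases eq_or_lt_of_le (Set.mem_Ici.1 hx) with h | h
  · -- x = 0
    subst h
    rw [← continuousWithinAt_diff_self]
    have hslope : Filter.Tendsto (fun t : ℝ => Real.sinh t / t) (nhdsWithin 0 {(0:ℝ)}ᶜ)
        (nhds 1) := by
      have := hasDerivAt_iff_tendsto_slope.1 (Real.hasDerivAt_sinh 0)
      rw [Real.cosh_zero] at this
      refine this.congr fun t => ?_
      simp [slope_def_field, div_eq_div_iff]
    have hlog : Filter.Tendsto lsd (nhdsWithin 0 {(0:ℝ)}ᶜ) (nhds 0) := by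
      have hc : Filter.Tendsto Real.log (nhds 1) (nhds 0) := by
        simpa using (Real.continuousAt_log one_ne_zero).tendsto
      exact hc.comp hslope
    have : lsd 0 = 0 := by simp [lsd]
    rw [ContinuousWithinAt, this]
    exact hlog.mono_left (nhdsWithin_mono _ (by intro t ht; exact ht.2))
  · exact ((lsd_hasDerivAt h).continuousAt).continuousWithinAt

lemma sinh_le_mul_cosh {x : ℝ} (hx : 0 ≤ x) : Real.sinh x ≤ x * Real.cosh x := by
  have hmono : MonotoneOn (fun t : ℝ => t * Real.cosh t - Real.sinh t) (Set.Ici 0) := by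
    have hd : ∀ t : ℝ, HasDerivAt (fun t : ℝ => t * Real.cosh t - Real.sinh t)
        (t * Real.sinh t) t := by
      intro t
      have := ((hasDerivAt_id t).mul (Real.hasDerivAt_cosh t)).sub (Real.hasDerivAt_sinh t)
      refine this.congr_deriv ?_
      simp only [id]
      ring
    refine monotoneOn_of_deriv_nonneg (convex_Ici 0)
      (fun t _ => ((hd t).continuousAt).continuousWithinAt)
      (fun t _ => ((hd t).differentiableAt).differentiableWithinAt) ?_
    intro t ht
    rw [interior_Ici] at ht
    rw [(hd t).deriv]
    exact mul_nonneg (le_of_lt ht) (le_of_lt (Real.sinh_pos_iff.2 ht))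
  have h0 := hmono (Set.self_mem_Ici) hx hx
  simp only [Real.sinh_zero, Real.cosh_zero, mul_one, zero_mul, sub_zero] at h0
  linarith

lemma lsd_deriv_nonneg {x : ℝ} (hx : 0 < x) : 0 ≤ Real.cosh x / Real.sinh x - 1 / x := by
  have hs : 0 < Real.sinh x := Real.sinh_pos_iff.2 hx
  rw [sub_nonneg, div_le_div_iff₀ hx hs]
  simpa [mul_comm] using sinh_le_mul_cosh (le_of_lt hx)

lemma lsd_convexOn_Ici : ConvexOn ℝ (Set.Ici 0) lsd := by
  refine convexOn_of_hasDerivWithinAt2_nonneg (convex_Ici 0) lsd_continuousOn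
    (f' := fun t => Real.cosh t / Real.sinh t - 1 / t)
    (f'' := fun t => 1 / t ^ 2 - 1 / Real.sinh t ^ 2) ?_ ?_ ?_
  · intro x hx
    rw [interior_Ici] at hx
    exact (lsd_hasDerivAt hx).hasDerivWithinAt
  · intro x hx
    rw [interior_Ici] at hx
    exact (lsd_deriv2 hx).hasDerivWithinAt
  · intro x hx
    rw [interior_Ici] at hx
    have hxs : x ≤ Real.sinh x := Real.self_le_sinh_iff.2 (le_of_lt hx)
    have hs : 0 < Real.sinh x := Real.sinh_pos_iff.2 hx
    have hx' : (0:ℝ) < x := hx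
    have h2 : x ^ 2 ≤ Real.sinh x ^ 2 := pow_le_pow_left₀ (le_of_lt hx') hxs 2
    rw [sub_nonneg]
    exact one_div_le_one_div_of_le (by positivity) h2

lemma lsd_monotoneOn : MonotoneOn lsd (Set.Ici 0) := by
  refine monotoneOn_of_deriv_nonneg (convex_Ici 0) lsd_continuousOn ?_ ?_
  · intro x hx
    rw [interior_Ici] at hx
    exact (lsd_hasDerivAt hx).differentiableAt.differentiableWithinAt
  · intro x hx
    rw [interior_Ici] at hx
    rw [(lsd_hasDerivAt hx).deriv]
    exact lsd_deriv_nonneg hx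

lemma lsd_convexOn_univ : ConvexOn ℝ Set.univ lsd := by
  have habs : ConvexOn ℝ Set.univ (fun t : ℝ => |t|) := by
    refine ⟨convex_univ, fun x _ y _ a b ha hb _ => ?_⟩
    simp only [smul_eq_mul]
    exact (abs_add_le _ _).trans (by rw [abs_mul, abs_mul, abs_of_nonneg ha, abs_of_nonneg hb])
  have himg : (fun t : ℝ => |t|) '' Set.univ = Set.Ici 0 := by
    ext y
    constructor
    · rintro ⟨x, -, rfl⟩; exact abs_nonneg x
    · intro hy; exact ⟨y, Set.mem_univ y, abs_of_nonneg hy⟩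
  have hcomp : ConvexOn ℝ Set.univ (lsd ∘ fun t : ℝ => |t|) :=
    ConvexOn.comp (himg ▸ lsd_convexOn_Ici) habs (himg ▸ lsd_monotoneOn)
  have heq : (lsd ∘ fun t : ℝ => |t|) = lsd := by
    funext t
    rcases le_or_gt 0 t with h | h
    · simp [Function.comp, abs_of_nonneg h]
    · simp only [Function.comp, abs_of_neg h]
      exact lsd_even t
  rwa [heq] at hcomp

/-- For any finite family `α i` of linear functionals on a real vector space `E`, the
function `Y ↦ ∑ i, log (sinh (α i Y) / α i Y)` is convex on all of `E` (where each summand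
takes the value `0` when `α i Y = 0`, by Lean's conventions `0/0 = 0` and `log 0 = 0`). -/
theorem sum_log_sinh_div_roots_convexOn (E : Type*) [AddCommGroup E] [Module ℝ E]
    (ι : Type*) [Fintype ι] (α : ι → (E →ₗ[ℝ] ℝ)) :
    ConvexOn ℝ Set.univ
      (fun Y : E => ∑ i : ι, Real.log (Real.sinh (α i Y) / (α i Y))) := by
  have hterm : ∀ i : ι, ConvexOn ℝ Set.univ (fun Y : E => lsd (α i Y)) := by
    intro i
    have := lsd_convexOn_univ.comp_linearMap (α i)
    simpa [Set.preimage_univ, Function.comp_def] using this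
  have hsum : ∀ s : Finset ι, ConvexOn ℝ Set.univ (fun Y : E => ∑ i ∈ s, lsd (α i Y)) := by
    intro s
    induction s using Finset.cons_induction with
    | empty => simpa using convexOn_const (0 : ℝ) convex_univ
    | cons i s hi ih =>
      simp only [Finset.sum_cons]
      exact (hterm i).add ih
  simpa [lsd] using hsum Finset.univ
end

section
/- Let S and T be unbounded operators on a complex Hilbert space E defined on a common dense domain D (i.e. S.domain = T.domain = D with D dense in E), each symmetric and positive on D, and each essentially self-adjoint (closable with self-adjoint closure). Then the sum S + T with domain D is closable, and its closure C = (S+T)‾ satisfies ker C ⊆ ker S̄ ∩ ker T̄; explicitly, if x lies in the domain of C and C x = 0, then x lies in the domains of the closures S̄ and T̄ and S̄ x = 0 and T̄ x = 0. -/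
open scoped ComplexInnerProductSpace
open LinearPMap Filter Topology

section Aux

variable {E : Type*} [NormedAddCommGroup E] [InnerProductSpace ℂ E] [CompleteSpace E]

lemma aux_mem_adjoint_graph_iff (P : E →ₗ.[ℂ] E) (hd : Dense (P.domain : Set E))
    {y z : E} : (y, z) ∈ P.adjoint.graph ↔ ∀ x : P.domain, ⟪z, (x : E)⟫ = ⟪y, P x⟫ := by
  constructor
  · intro h x
    rw [LinearPMap.mem_graph_iff] at h
    obtain ⟨v, hv1, hv2⟩ := h
    have h3 := LinearPMap.adjoint_isFormalAdjoint hd (T := P) v x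
    rw [hv2, hv1] at h3
    exact h3
  · intro h
    have hy : y ∈ P.adjoint.domain := LinearPMap.mem_adjoint_domain_of_exists y ⟨z, h⟩
    have happ : P.adjoint ⟨y, hy⟩ = z := LinearPMap.adjoint_apply_eq hd ⟨y, hy⟩ h
    have := P.adjoint.mem_graph ⟨y, hy⟩
    rwa [happ] at this

lemma aux_adjoint_isClosed (P : E →ₗ.[ℂ] E) (hd : Dense (P.domain : Set E)) :
    P.adjoint.IsClosed := by
  have hset : (P.adjoint.graph : Set (E × E)) =
      ⋂ x : P.domain, {p : E × E | ⟪p.2, (x : E)⟫ = ⟪p.1, P x⟫} := by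
    ext ⟨y, z⟩
    simp only [SetLike.mem_coe, aux_mem_adjoint_graph_iff P hd, Set.mem_iInter,
      Set.mem_setOf_eq]
  show IsClosed (P.adjoint.graph : Set (E × E))
  rw [hset]
  exact isClosed_iInter fun x => isClosed_eq
    ((continuous_snd.inner continuous_const)) ((continuous_fst.inner continuous_const))

lemma aux_symm_isClosable (P : E →ₗ.[ℂ] E) (hd : Dense (P.domain : Set E))
    (hsymm : ∀ x y : P.domain, ⟪P x, (y : E)⟫ = ⟪(x : E), P y⟫) : P.IsClosable :=
  (aux_adjoint_isClosed P hd).isClosable.leIsClosable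
    (LinearPMap.IsFormalAdjoint.le_adjoint hd hsymm)

lemma aux_cs (S : E →ₗ.[ℂ] E)
    (hsymm : ∀ x y : S.domain, ⟪S x, (y : E)⟫ = ⟪(x : E), S y⟫)
    (hpos : ∀ x : S.domain, 0 ≤ (⟪(x : E), S x⟫).re)
    (y u : S.domain) :
    ‖⟪(y : E), S u⟫‖ ^ 2 ≤ (⟪(y : E), S y⟫).re * (⟪(u : E), S u⟫).re := by
  set α : ℂ := ⟪(y : E), S u⟫ with hα
  have hconj : ⟪(u : E), S y⟫ = (starRingEnd ℂ) α := by
    rw [← inner_conj_symm ((u : E)) (S y), hsymm y u]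
  have hgoal : ‖α‖ ^ 2 = Complex.normSq α := by
    rw [Complex.normSq_eq_norm_sq]
  have key : ∀ t : ℝ, 0 ≤ (Complex.normSq α * (⟪(u : E), S u⟫).re) * (t * t)
      + (-(2 * Complex.normSq α)) * t + (⟪(y : E), S y⟫).re := by
    intro t
    set c : ℂ := -(t : ℂ) * (starRingEnd ℂ) α with hc
    have h := hpos (y + c • u)
    have hcoe : ((y + c • u : S.domain) : E) = (y : E) + c • (u : E) := rfl
    rw [LinearPMap.map_add, LinearPMap.map_smul, hcoe] at h
    have hval : ⟪(y : E) + c • (u : E), (S y) + c • (S u)⟫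
        = ⟪(y : E), S y⟫ + c * α + (starRingEnd ℂ) c * (starRingEnd ℂ) α
          + (starRingEnd ℂ) c * c * ⟪(u : E), S u⟫ := by
      simp only [inner_add_left, inner_add_right, inner_smul_left, inner_smul_right,
        hconj, ← hα]
      ring
    have e1 : c * α = ((-(t * Complex.normSq α) : ℝ) : ℂ) := by
      rw [hc, mul_assoc, mul_comm ((starRingEnd ℂ) α) α, Complex.mul_conj]
      push_cast
      ring
    have e2 : (starRingEnd ℂ) c * (starRingEnd ℂ) α = (starRingEnd ℂ) (c * α) :=
      (map_mul _ _ _).symm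
    have e3 : (starRingEnd ℂ) c * c = ((t * t * Complex.normSq α : ℝ) : ℂ) := by
      rw [mul_comm, Complex.mul_conj]
      norm_cast
      rw [hc]
      simp only [map_mul, Complex.normSq_neg, Complex.normSq_ofReal, Complex.normSq_conj]
    rw [hval, e2, e1, e3] at h
    simp only [Complex.add_re, Complex.ofReal_re, Complex.conj_ofReal,
      Complex.re_ofReal_mul] at h
    linarith
  have hd := discrim_le_zero key
  rw [discrim] at hd
  have hA : 0 ≤ (⟪(u : E), S u⟫).re := hpos u
  have hC : 0 ≤ (⟪(y : E), S y⟫).re := hpos y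
  have hNn : 0 ≤ Complex.normSq α := Complex.normSq_nonneg α
  rw [hgoal]
  rcases eq_or_lt_of_le hNn with h0 | h0
  · rw [← h0]
    exact mul_nonneg hC hA
  · nlinarith [hd]

lemma aux_kernel (S : E →ₗ.[ℂ] E)
    (hsymm : ∀ x y : S.domain, ⟪S x, (y : E)⟫ = ⟪(x : E), S y⟫)
    (hpos : ∀ x : S.domain, 0 ≤ (⟪(x : E), S x⟫).re)
    (hc : S.IsClosable) (hsa : IsSelfAdjoint S.closure)
    {x : E} (a : ℕ → S.domain)
    (ha : Tendsto (fun n => ((a n : E))) atTop (𝓝 x))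
    (hq : Tendsto (fun n => (⟪((a n : E)), S (a n)⟫).re) atTop (𝓝 0)) :
    ∃ hx : x ∈ S.closure.domain, S.closure ⟨x, hx⟩ = 0 := by
  -- Step 1: ⟪S y, x⟫ = 0 for y in the domain of S
  have h1 : ∀ y : S.domain, ⟪S y, x⟫ = (0 : ℂ) := by
    intro y
    have hlim1 : Tendsto (fun n => ⟪S y, ((a n : E))⟫) atTop (𝓝 ⟪S y, x⟫) :=
      tendsto_const_nhds.inner ha
    have hnormsq : Tendsto (fun n => ‖⟪S y, ((a n : E))⟫‖ ^ 2) atTop (𝓝 0) := by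
      refine squeeze_zero (g := fun n => (⟪(y : E), S y⟫).re * (⟪((a n : E)), S (a n)⟫).re)
        (fun n => by positivity) (fun n => ?_) ?_
      · rw [hsymm y (a n)]
        exact aux_cs S hsymm hpos y (a n)
      · simpa using hq.const_mul ((⟪(y : E), S y⟫).re)
    have hnorm : Tendsto (fun n => ‖⟪S y, ((a n : E))⟫‖) atTop (𝓝 0) := by
      have := hnormsq.sqrt
      simpa [Real.sqrt_sq (norm_nonneg _)] using this
    have hzero : Tendsto (fun n => ⟪S y, ((a n : E))⟫) atTop (𝓝 0) :=
      tendsto_zero_iff_norm_tendsto_zero.mpr hnorm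
    exact tendsto_nhds_unique hlim1 hzero
  -- Step 2: ⟪x, S.closure y⟫ = 0 for y in the domain of the closure
  have h2 : ∀ y : S.closure.domain, ⟪(0 : E), (y : E)⟫ = ⟪x, S.closure y⟫ := by
    intro y
    have hy : ((y : E), S.closure y) ∈ _root_.closure (S.graph : Set (E × E)) := by
      have hmem := S.closure.mem_graph y
      rw [← hc.graph_closure_eq_closure_graph] at hmem
      exact hmem
    obtain ⟨b, hb, hbl⟩ := mem_closure_iff_seq_limit.mp hy
    choose cseq hc1 hc2 using fun n => (S.mem_graph_iff.mp (hb n))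
    have hsnd : Tendsto (fun n => (b n).2) atTop (𝓝 (S.closure y)) :=
      (continuous_snd.tendsto _).comp hbl
    have hlim : Tendsto (fun n => ⟪(b n).2, x⟫) atTop (𝓝 ⟪S.closure y, x⟫) :=
      hsnd.inner tendsto_const_nhds
    have hzero : Tendsto (fun n => ⟪(b n).2, x⟫) atTop (𝓝 (0 : ℂ)) := by
      have heq : (fun n => ⟪(b n).2, x⟫) = fun _ => (0 : ℂ) := by
        funext n
        rw [← hc2 n]
        exact h1 (cseq n)
      rw [heq]
      exact tendsto_const_nhds
    have h3 : ⟪S.closure y, x⟫ = 0 := tendsto_nhds_unique hlim hzero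
    rw [inner_zero_left, ← inner_conj_symm x (S.closure y), h3]
    simp
  have hdense' : Dense (S.closure.domain : Set E) := hsa.dense_domain
  have hmem : x ∈ S.closure.adjoint.domain :=
    LinearPMap.mem_adjoint_domain_of_exists x ⟨0, h2⟩
  have happ : S.closure.adjoint ⟨x, hmem⟩ = 0 :=
    LinearPMap.adjoint_apply_eq hdense' ⟨x, hmem⟩ h2
  have hgr : (x, (0 : E)) ∈ S.closure.adjoint.graph := by
    have := S.closure.adjoint.mem_graph ⟨x, hmem⟩
    rwa [happ] at this
  rw [LinearPMap.isSelfAdjoint_def.mp hsa] at hgr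
  have hdom : x ∈ S.closure.domain := mem_domain_of_mem_graph hgr
  exact ⟨hdom, S.closure.mem_graph_snd_inj (S.closure.mem_graph ⟨x, hdom⟩) hgr rfl⟩

end Aux

/-- If `S` and `T` are unbounded operators on a complex Hilbert space, defined on a common
dense domain `D`, each symmetric, positive and essentially self-adjoint, then the sum
`S + T` (with domain `D`) is closable and the kernel of its closure `C` is contained in
`ker S̄ ∩ ker T̄`. -/
theorem kernel_closure_sum_subset_inter_kernels
    (E : Type*) [NormedAddCommGroup E] [InnerProductSpace ℂ E] [CompleteSpace E]
    (S T : E →ₗ.[ℂ] E) (D : Submodule ℂ E)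
    (hSD : S.domain = D) (hTD : T.domain = D) (hdense : Dense (D : Set E))
    (hSsymm : ∀ x y : S.domain, ⟪S x, (y : E)⟫ = ⟪(x : E), S y⟫)
    (hTsymm : ∀ x y : T.domain, ⟪T x, (y : E)⟫ = ⟪(x : E), T y⟫)
    (hSpos : ∀ x : S.domain, 0 ≤ (⟪(x : E), S x⟫).re)
    (hTpos : ∀ x : T.domain, 0 ≤ (⟪(x : E), T x⟫).re)
    (hSesa : S.IsClosable ∧ IsSelfAdjoint S.closure)
    (hTesa : T.IsClosable ∧ IsSelfAdjoint T.closure) :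
    (S + T).IsClosable ∧
      ∀ x : (S + T).closure.domain, (S + T).closure x = 0 →
        ∃ (hxS : (x : E) ∈ S.closure.domain) (hxT : (x : E) ∈ T.closure.domain),
          S.closure ⟨x, hxS⟩ = 0 ∧ T.closure ⟨x, hxT⟩ = 0 := by
  have hPdom : (S + T).domain = D := by
    rw [LinearPMap.add_domain, hSD, hTD, inf_idem]
  have hPdense : Dense (((S + T).domain : Submodule ℂ E) : Set E) := by
    rw [hPdom]; exact hdense
  have hPapply : ∀ x : (S + T).domain,
      (S + T) x = S ⟨(x : E), x.2.1⟩ + T ⟨(x : E), x.2.2⟩ := fun x =>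
    LinearPMap.add_apply S T x
  have hPsymm : ∀ x y : (S + T).domain, ⟪(S + T) x, (y : E)⟫ = ⟪(x : E), (S + T) y⟫ := by
    intro x y
    rw [hPapply x, hPapply y, inner_add_left, inner_add_right,
      hSsymm ⟨(x : E), x.2.1⟩ ⟨(y : E), y.2.1⟩, hTsymm ⟨(x : E), x.2.2⟩ ⟨(y : E), y.2.2⟩]
  have hclos : (S + T).IsClosable := aux_symm_isClosable _ hPdense hPsymm
  refine ⟨hclos, ?_⟩
  intro x hx
  have hgr : (((x : E)), (0 : E)) ∈ _root_.closure (((S + T).graph : Submodule ℂ (E × E)) : Set (E × E)) := by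
    have hmem := (S + T).closure.mem_graph x
    rw [hx] at hmem
    rw [← hclos.graph_closure_eq_closure_graph] at hmem
    exact hmem
  obtain ⟨b, hb, hbl⟩ := mem_closure_iff_seq_limit.mp hgr
  choose a ha1 ha2 using fun n => ((S + T).mem_graph_iff.mp (hb n))
  have haT : Tendsto (fun n => ((a n : E))) atTop (𝓝 (x : E)) := by
    have h1 : Tendsto (fun n => (b n).1) atTop (𝓝 (x : E)) :=
      (continuous_fst.tendsto (((x : E), (0 : E)) : E × E)).comp hbl
    exact h1.congr fun n => (ha1 n).symm
  have hPaT : Tendsto (fun n => (S + T) (a n)) atTop (𝓝 (0 : E)) := by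
    have h2 : Tendsto (fun n => (b n).2) atTop (𝓝 (0 : E)) :=
      (continuous_snd.tendsto (((x : E), (0 : E)) : E × E)).comp hbl
    exact h2.congr fun n => (ha2 n).symm
  have hinner : Tendsto (fun n => (⟪((a n : E)), (S + T) (a n)⟫).re) atTop (𝓝 0) := by
    have h := Filter.Tendsto.inner (𝕜 := ℂ) haT hPaT
    rw [inner_zero_right] at h
    have := (Complex.continuous_re.tendsto (0 : ℂ)).comp h
    exact this
  have hSre : Tendsto (fun n => (⟪((a n : E)), S ⟨(a n : E), (a n).2.1⟩⟫).re) atTop (𝓝 0) := by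
    refine squeeze_zero (fun n => hSpos ⟨(a n : E), (a n).2.1⟩) (fun n => ?_) hinner
    rw [hPapply (a n), inner_add_right, Complex.add_re]
    have := hTpos ⟨(a n : E), (a n).2.2⟩
    linarith
  have hTre : Tendsto (fun n => (⟪((a n : E)), T ⟨(a n : E), (a n).2.2⟩⟫).re) atTop (𝓝 0) := by
    refine squeeze_zero (fun n => hTpos ⟨(a n : E), (a n).2.2⟩) (fun n => ?_) hinner
    rw [hPapply (a n), inner_add_right, Complex.add_re]
    have := hSpos ⟨(a n : E), (a n).2.1⟩
    linarith
  obtain ⟨hxS, hS0⟩ := aux_kernel S hSsymm hSpos hSesa.1 hSesa.2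
    (fun n => ⟨(a n : E), (a n).2.1⟩) (by exact haT) (by exact hSre)
  obtain ⟨hxT, hT0⟩ := aux_kernel T hTsymm hTpos hTesa.1 hTesa.2
    (fun n => ⟨(a n : E), (a n).2.2⟩) (by exact haT) (by exact hTre)
  exact ⟨hxS, hxT, hS0, hT0⟩
end

section
/- Let n, k be natural numbers with k ≥ 1 and let A be a positive definite (hence hermitian) complex n × n matrix. Define the complex matrix B indexed by functions p, q : Fin k → Fin n by B(p, q) = ∑_{i : Fin k} A(p i, q i) · ∏_{j ≠ i} δ_{p j, q j}, where δ_{a,b} = 1 if a = b and 0 otherwise. Then B is positive definite. -/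
open scoped ComplexOrder Matrix

private lemma key_reindex (n k : ℕ) (A : Matrix (Fin n) (Fin n) ℂ)
    (x : (Fin k → Fin n) → ℂ) (i : Fin k) :
    ∑ p : Fin k → Fin n, ∑ q : Fin k → Fin n,
      (starRingEnd ℂ) (x p) * (A (p i) (q i) *
        ∏ j ∈ Finset.univ.erase i, (if p j = q j then (1 : ℂ) else 0)) * x q
    = ∑ r : {j : Fin k // j ≠ i} → Fin n,
        (star (fun a => x ((Equiv.funSplitAt i (Fin n)).symm (a, r)))) ⬝ᵥ
          (A *ᵥ fun a => x ((Equiv.funSplitAt i (Fin n)).symm (a, r))) := by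
  set e := Equiv.funSplitAt i (Fin n) with he
  have step1 : ∀ (F : (Fin k → Fin n) → (Fin k → Fin n) → ℂ),
      ∑ p, ∑ q, F p q = ∑ z, ∑ w, F (e.symm z) (e.symm w) := by
    intro F
    rw [← Equiv.sum_comp e.symm (fun p => ∑ q, F p q)]
    exact Finset.sum_congr rfl fun z _ => (Equiv.sum_comp e.symm _).symm
  rw [step1, Fintype.sum_prod_type, Finset.sum_comm]
  refine Finset.sum_congr rfl fun r _ => ?_
  simp only [dotProduct, Matrix.mulVec, Pi.star_apply, RCLike.star_def, Finset.mul_sum]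
  refine Finset.sum_congr rfl fun a _ => ?_
  rw [Fintype.sum_prod_type, Finset.sum_comm]
  have hval : ∀ (a : Fin n) (r : {j : Fin k // j ≠ i} → Fin n), (e.symm (a, r)) i = a := by
    intro a r
    simp [he, Equiv.funSplitAt_symm_apply]
  have hdelta : ∀ (b : Fin n) (s : {j : Fin k // j ≠ i} → Fin n),
      (∏ j ∈ Finset.univ.erase i, (if (e.symm (a, r)) j = (e.symm (b, s)) j then (1:ℂ) else 0))
      = if r = s then 1 else 0 := by
    intro b s
    rw [Finset.prod_boole]
    congr 1
    simp only [eq_iff_iff]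
    constructor
    · intro h
      funext j
      have := h j (Finset.mem_erase.2 ⟨j.2, Finset.mem_univ _⟩)
      simpa [he, Equiv.funSplitAt_symm_apply, dif_neg j.2] using this
    · rintro rfl j hj
      simp [he, Equiv.funSplitAt_symm_apply, (Finset.mem_erase.1 hj).1]
  calc ∑ s : {j : Fin k // j ≠ i} → Fin n, ∑ b : Fin n,
        (starRingEnd ℂ) (x (e.symm (a, r))) * (A ((e.symm (a, r)) i) ((e.symm (b, s)) i) *
          ∏ j ∈ Finset.univ.erase i, (if (e.symm (a, r)) j = (e.symm (b, s)) j then (1:ℂ) else 0))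
            * x (e.symm (b, s))
      = ∑ s : {j : Fin k // j ≠ i} → Fin n, ∑ b : Fin n,
        (if r = s then 1 else 0) * ((starRingEnd ℂ) (x (e.symm (a, r))) *
          (A a b * x (e.symm (b, s)))) := by
        refine Finset.sum_congr rfl fun s _ => Finset.sum_congr rfl fun b _ => ?_
        rw [hdelta b s, hval a r, hval b s]
        ring
  _ = ∑ b : Fin n, (starRingEnd ℂ) (x (e.symm (a, r))) * (A a b * x (e.symm (b, r))) := by
        have hswap : ∀ s : {j : Fin k // j ≠ i} → Fin n,
            (∑ b : Fin n, (if r = s then (1:ℂ) else 0) * ((starRingEnd ℂ) (x (e.symm (a, r))) *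
              (A a b * x (e.symm (b, s)))))
            = if r = s then (∑ b : Fin n, (starRingEnd ℂ) (x (e.symm (a, r))) *
              (A a b * x (e.symm (b, s)))) else 0 := by
          intro s; split_ifs <;> simp
        simp_rw [hswap]
        rw [Finset.sum_ite_eq]
        simp
  _ = _ := by
        refine Finset.sum_congr rfl fun b _ => by ring

/-- If `A` is a positive definite complex `n × n` matrix and `k ≥ 1`, then the matrix of
the derivation extension `∑ᵢ 1 ⊗ ⋯ ⊗ A ⊗ ⋯ ⊗ 1` of `A` on the `k`-th tensor power of `ℂⁿ`
(in the standard tensor basis) is positive definite. -/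
theorem derivation_extension_posDef (n k : ℕ) (hk : 1 ≤ k)
    (A : Matrix (Fin n) (Fin n) ℂ) (hA : A.PosDef) :
    Matrix.PosDef (fun p q : Fin k → Fin n =>
      ∑ i : Fin k, A (p i) (q i) *
        ∏ j ∈ Finset.univ.erase i, (if p j = q j then (1 : ℂ) else 0)) := by
  refine Matrix.posDef_iff_dotProduct_mulVec.mpr ⟨?_, ?_⟩
  · show Matrix.conjTranspose _ = _
    ext p q
    change star (∑ i : Fin k, A (q i) (p i) * ∏ j ∈ Finset.univ.erase i, (if q j = p j then (1:ℂ) else 0)) = ∑ i : Fin k, A (p i) (q i) * ∏ j ∈ Finset.univ.erase i, (if p j = q j then (1:ℂ) else 0)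
    simp only [Matrix.conjTranspose_apply, star_sum, star_mul', star_prod]
    refine Finset.sum_congr rfl fun i _ => ?_
    congr 1
    · exact hA.1.apply (p i) (q i)
    · refine Finset.prod_congr rfl fun j _ => ?_
      simp only [apply_ite (star : ℂ → ℂ), star_one, star_zero]
      exact if_congr eq_comm rfl rfl
  · intro x hx
    have expand : star x ⬝ᵥ ((fun p q : Fin k → Fin n =>
        ∑ i : Fin k, A (p i) (q i) *
          ∏ j ∈ Finset.univ.erase i, (if p j = q j then (1 : ℂ) else 0)) *ᵥ x)
        = ∑ i : Fin k, ∑ p : Fin k → Fin n, ∑ q : Fin k → Fin n,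
            (starRingEnd ℂ) (x p) * (A (p i) (q i) *
              ∏ j ∈ Finset.univ.erase i, (if p j = q j then (1 : ℂ) else 0)) * x q := by
      have tri : ∀ (f : (Fin k → Fin n) → (Fin k → Fin n) → Fin k → ℂ),
          ∑ p, ∑ q, ∑ i, f p q i = ∑ i, ∑ p, ∑ q, f p q i := by
        intro f
        rw [show (∑ p, ∑ q, ∑ i, f p q i) = ∑ p, ∑ i, ∑ q, f p q i from
          Finset.sum_congr rfl fun p _ => Finset.sum_comm]
        exact Finset.sum_comm
      calc star x ⬝ᵥ ((fun p q : Fin k → Fin n =>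
            ∑ i : Fin k, A (p i) (q i) *
              ∏ j ∈ Finset.univ.erase i, (if p j = q j then (1 : ℂ) else 0)) *ᵥ x)
          = ∑ p : Fin k → Fin n, ∑ q : Fin k → Fin n, ∑ i : Fin k,
              (starRingEnd ℂ) (x p) * (A (p i) (q i) *
                ∏ j ∈ Finset.univ.erase i, (if p j = q j then (1 : ℂ) else 0)) * x q := by
            simp only [dotProduct, Matrix.mulVec, Pi.star_apply, RCLike.star_def,
              Finset.mul_sum, Finset.sum_mul]
            exact Finset.sum_congr rfl fun p _ => Finset.sum_congr rfl fun q _ =>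
              Finset.sum_congr rfl fun i _ => by ring
        _ = _ := tri _
    rw [expand]
    have hterm : ∀ i : Fin k, (∑ p : Fin k → Fin n, ∑ q : Fin k → Fin n,
        (starRingEnd ℂ) (x p) * (A (p i) (q i) *
          ∏ j ∈ Finset.univ.erase i, (if p j = q j then (1 : ℂ) else 0)) * x q)
        = ∑ r : {j : Fin k // j ≠ i} → Fin n,
            (star (fun a => x ((Equiv.funSplitAt i (Fin n)).symm (a, r)))) ⬝ᵥ
              (A *ᵥ fun a => x ((Equiv.funSplitAt i (Fin n)).symm (a, r))) :=
      fun i => key_reindex n k A x i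
    simp_rw [hterm]
    obtain ⟨p0, hp0⟩ := Function.ne_iff.1 hx
    set i0 : Fin k := ⟨0, hk⟩
    refine Finset.sum_pos' (fun i _ => Finset.sum_nonneg fun r _ =>
      hA.posSemidef.dotProduct_mulVec_nonneg _) ⟨i0, Finset.mem_univ _, ?_⟩
    refine Finset.sum_pos' (fun r _ => hA.posSemidef.dotProduct_mulVec_nonneg _)
      ⟨((Equiv.funSplitAt i0 (Fin n)) p0).2, Finset.mem_univ _, ?_⟩
    refine hA.dotProduct_mulVec_pos ?_
    refine Function.ne_iff.2 ⟨p0 i0, ?_⟩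
    have heq : (Equiv.funSplitAt i0 (Fin n)).symm (p0 i0,
        ((Equiv.funSplitAt i0 (Fin n)) p0).2) = p0 :=
      (Equiv.funSplitAt i0 (Fin n)).symm_apply_apply p0
    show x ((Equiv.funSplitAt i0 (Fin n)).symm (p0 i0,
        ((Equiv.funSplitAt i0 (Fin n)) p0).2)) ≠ 0
    rw [heq]
    exact hp0
end
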